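/- Let ρ : [0, ∞) → ℝ and y : [0, ∞) → ℝ be differentiable functions with ρ(t) > 0 for all t ≥ 0 and |y(0)| < ρ(0). Suppose that for every t ≥ 0: if y(t) = ρ(t) then ẏ(t) < ρ̇(t), and if y(t) = −ρ(t) then ẏ(t) > −ρ̇(t). Then |y(t)| < ρ(t) for all t ≥ 0. -/

import Mathlib

/-- If `g` is differentiable at `T`, vanishes at `T`, and is negative on a
left neighborhood `(a, T)`, then `deriv g T ≥ 0`. -/
lemma deriv_nonneg_of_left_neg (g : ℝ → ℝ) (a T : ℝ) (haT : a < T)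
    (hg : DifferentiableAt ℝ g T) (hT : g T = 0)
    (hneg : ∀ t ∈ Set.Ioo a T, g t < 0) : 0 ≤ deriv g T := by
  have h := hg.hasDerivAt
  rw [hasDerivAt_iff_tendsto_slope] at h
  have h' : Filter.Tendsto (slope g T) (nhdsWithin T (Set.Iio T)) (nhds (deriv g T)) :=
    h.mono_left (nhdsWithin_mono _ (fun x hx => ne_of_lt hx))
  refine ge_of_tendsto h' ?_
  filter_upwards [Ioo_mem_nhdsLT_of_mem (Set.mem_Ioc.mpr ⟨haT, le_refl T⟩)] with t ht
  have h1 : g t - g T < 0 := by rw [hT]; simpa using hneg t ht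
  have h2 : t - T < 0 := sub_neg.mpr ht.2
  have : 0 < (g t - g T) / (t - T) := div_pos_of_neg_of_neg h1 h2
  rw [slope_def_field]
  exact le_of_lt (by simpa [div_eq_div_iff] using this)

/-- Funnel-invariance (barrier/viability) argument: a differentiable signal
that starts strictly inside a time-varying symmetric funnel, and whose
derivative strictly pushes inward whenever it touches a funnel boundary,
remains strictly inside the funnel for all time `t ≥ 0`. -/
theorem funnel_invariance
    (ρ y : ℝ → ℝ)
    (hρdiff : ∀ t ≥ (0 : ℝ), DifferentiableAt ℝ ρ t)
    (hydiff : ∀ t ≥ (0 : ℝ), DifferentiableAt ℝ y t)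
    (hρpos : ∀ t ≥ (0 : ℝ), 0 < ρ t)
    (hinit : |y 0| < ρ 0)
    (hup : ∀ t ≥ (0 : ℝ), y t = ρ t → deriv y t < deriv ρ t)
    (hlow : ∀ t ≥ (0 : ℝ), y t = -ρ t → deriv y t > -deriv ρ t) :
    ∀ t ≥ (0 : ℝ), |y t| < ρ t := by
  by_contra hcon
  push_neg at hcon
  obtain ⟨t₀, ht₀, ht₀'⟩ := hcon
  set S : Set ℝ := {t : ℝ | 0 ≤ t ∧ ρ t ≤ |y t|} with hS
  have hne : S.Nonempty := ⟨t₀, ht₀, ht₀'⟩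
  have hbdd : BddBelow S := ⟨0, fun x hx => hx.1⟩
  set T := sInf S with hTdef
  have hT0 : 0 ≤ T := le_csInf hne (fun x hx => hx.1)
  -- continuity of f = ρ - |y| at T
  have hyc : ContinuousAt y T := (hydiff T hT0).continuousAt
  have hρc : ContinuousAt ρ T := (hρdiff T hT0).continuousAt
  have hfc : ContinuousAt (fun t => ρ t - |y t|) T := hρc.sub hyc.abs
  -- T ∈ closure S, so ρ T ≤ |y T|
  have hclos : T ∈ closure S := csInf_mem_closure hne hbdd
  have hTin : ρ T ≤ |y T| := by
    obtain ⟨u, hu, hlim⟩ := mem_closure_iff_seq_limit.mp hclos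
    have htend : Filter.Tendsto (fun n => ρ (u n) - |y (u n)|) Filter.atTop
        (nhds (ρ T - |y T|)) := hfc.tendsto.comp hlim
    have : ρ T - |y T| ≤ 0 :=
      le_of_tendsto htend (Filter.Eventually.of_forall fun n => sub_nonpos.mpr (hu n).2)
    linarith
  have hTpos : 0 < T := by
    rcases lt_or_eq_of_le hT0 with h | h
    · exact h
    · exfalso; rw [← h] at hTin; exact absurd hTin (not_le.mpr hinit)
  -- strictly inside before T
  have hbefore : ∀ t ∈ Set.Ioo (0 : ℝ) T, |y t| < ρ t := by
    intro t ht
    by_contra hc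
    push_neg at hc
    exact absurd (csInf_le hbdd ⟨le_of_lt ht.1, hc⟩) (not_le.mpr ht.2)
  -- |y T| ≤ ρ T by left continuity
  have hTle : |y T| ≤ ρ T := by
    have htend : Filter.Tendsto (fun t => ρ t - |y t|) (nhdsWithin T (Set.Iio T))
        (nhds (ρ T - |y T|)) := hfc.continuousWithinAt.tendsto
    have : (0 : ℝ) ≤ ρ T - |y T| := by
      refine ge_of_tendsto htend ?_
      filter_upwards [Ioo_mem_nhdsLT_of_mem (Set.mem_Ioc.mpr ⟨hTpos, le_refl T⟩)] with t ht
      exact sub_nonneg.mpr (le_of_lt (hbefore t ht))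
    linarith
  have hTeq : |y T| = ρ T := le_antisymm hTle hTin
  rcases abs_eq (le_of_lt (hρpos T hT0)) |>.mp hTeq with hcase | hcase
  · -- y T = ρ T : consider g = y - ρ
    have hd : deriv y T < deriv ρ T := hup T hT0 hcase
    have hgd : DifferentiableAt ℝ (fun t => y t - ρ t) T :=
      (hydiff T hT0).sub (hρdiff T hT0)
    have h0 : 0 ≤ deriv (fun t => y t - ρ t) T := by
      refine deriv_nonneg_of_left_neg _ 0 T hTpos hgd (by simp [hcase]) ?_
      intro t ht
      have := hbefore t ht
      have : y t < ρ t := lt_of_le_of_lt (le_abs_self _) this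
      linarith
    rw [deriv_fun_sub (hydiff T hT0) (hρdiff T hT0)] at h0
    linarith
  · -- y T = -ρ T : consider g = -y - ρ
    have hd : deriv y T > -deriv ρ T := hlow T hT0 hcase
    have hgd : DifferentiableAt ℝ (fun t => -y t - ρ t) T :=
      ((hydiff T hT0).neg).sub (hρdiff T hT0)
    have h0 : 0 ≤ deriv (fun t => -y t - ρ t) T := by
      refine deriv_nonneg_of_left_neg _ 0 T hTpos hgd (by simp [hcase]) ?_
      intro t ht
      have := hbefore t ht
      have : -y t < ρ t := lt_of_le_of_lt (neg_le_abs _) this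
      linarith
    rw [deriv_fun_sub (f := fun t => -y t) ((hydiff T hT0).neg) (hρdiff T hT0), deriv.fun_neg] at h0
    linarith
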